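/- Let k be a field of characteristic not two and α, β ∈ k*. The Lie algebra L(α,β) is split if and only if the binary quadratic form ⟨−α, −β⟩ represents 1 over k (i.e., the Hilbert symbol (−α,−β) equals 1). -/

import Mathlib

set_option maxHeartbeats 1000000

/-- The bracket of `L(α,β)` on `k³`. -/
def Lbracket {k : Type*} [Field k] (α β : k) (u v : Fin 3 → k) : Fin 3 → k :=
  ![α * (u 1 * v 2 - u 2 * v 1), β * (u 2 * v 0 - u 0 * v 2), u 0 * v 1 - u 1 * v 0]

private def Fmat {k : Type*} [Field k] (β p q : k) (u : Fin 3 → k) : Matrix (Fin 2) (Fin 2) k :=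
  !![(u 1 * p - u 2 * (β*q))/2, (-(u 0)*β + u 1*(β*q) + u 2*(β*p))/2;
     (u 0 + u 1*q + u 2*p)/2, -((u 1 * p - u 2 * (β*q))/2)]

private def Gvec {k : Type*} [Field k] (α β p q : k) (M : Matrix (Fin 2) (Fin 2) k) : Fin 3 → k :=
  ![ M 1 0 - M 0 1/β,
     (-(β*q)*(M 1 0 + M 0 1/β) - p*(2*M 0 0))/α,
     (q*(2*M 0 0) - p*(M 1 0 + M 0 1/β))/α ]

lemma buildA {k : Type*} [Field k] (hchar : (2:k) ≠ 0) (α β p q : k) (hβ : β ≠ 0) (hα : α ≠ 0)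
    (hrel : p^2 + β*q^2 = -α) :
    ∃ e : (Fin 3 → k) ≃ₗ[k] LieAlgebra.SpecialLinear.sl (Fin 2) k,
      ∀ u v : Fin 3 → k, e (Lbracket α β u v) = ⁅e u, e v⁆ := by
  have hα2 : α = -(p^2 + β*q^2) := by linear_combination hrel
  have hFmem : ∀ u, Fmat β p q u ∈ LieAlgebra.SpecialLinear.sl (Fin 2) k := fun u =>
    (by simp [Fmat, Matrix.trace_fin_two] : Matrix.trace (Fmat β p q u) = 0)
  refine ⟨{ toFun := fun u => ⟨Fmat β p q u, hFmem u⟩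
            map_add' := ?_
            map_smul' := ?_
            invFun := fun m => Gvec α β p q m.val
            left_inv := ?_
            right_inv := ?_ }, ?_⟩
  · intro u v
    apply Subtype.ext
    show Fmat β p q (u + v) = Fmat β p q u + Fmat β p q v
    ext i j
    fin_cases i <;> fin_cases j <;> simp [Fmat] <;> ring
  · intro c u
    apply Subtype.ext
    show Fmat β p q (c • u) = c • Fmat β p q u
    ext i j
    fin_cases i <;> fin_cases j <;> simp [Fmat] <;> ring
  · intro u
    show Gvec α β p q (Fmat β p q u) = u
    have h0 : Gvec α β p q (Fmat β p q u) 0 = u 0 := by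
      simp [Gvec, Fmat]; field_simp; ring
    have h1 : Gvec α β p q (Fmat β p q u) 1 = u 1 := by
      simp [Gvec, Fmat]; field_simp; linear_combination (-2*u 1) * hrel
    have h2 : Gvec α β p q (Fmat β p q u) 2 = u 2 := by
      simp [Gvec, Fmat]; field_simp; linear_combination (-2*u 2) * hrel
    funext i
    fin_cases i
    · exact h0
    · exact h1
    · exact h2
  · intro m
    have htr : m.val 0 0 + m.val 1 1 = 0 := by
      have h2 : Matrix.trace (m.val) = 0 := m.property
      rwa [Matrix.trace_fin_two] at h2
    have h11 : m.val 1 1 = -(m.val 0 0) := by linear_combination htr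
    apply Subtype.ext
    show Fmat β p q (Gvec α β p q m.val) = m.val
    ext i j
    have e1 : (-(β*p^2*2) - β^2*q^2*2 : k) = 2*β*α := by
      linear_combination (-2*β) * hrel
    have e2 : (β^3*p^4*2 + β^4*p^2*q^2*4 + β^5*q^4*2 : k) = 2*β^3*α^2 := by
      linear_combination (2*β^3*(p^2+β*q^2-α)) * hrel
    have e3 : (-(q^2*β^2*2) - β*p^2*2 : k) = 2*β*α := by
      linear_combination (-2*β) * hrel
    have hmα : (-α : k) ≠ 0 := neg_ne_zero.mpr hα
    fin_cases i <;> fin_cases j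
    · simp [Gvec, Fmat]; try rw [h11]
      field_simp
      try rw [e1]
      linear_combination (-2*(m.val 0 0)) * hrel
    · simp [Gvec, Fmat]; try rw [h11]
      field_simp
      try rw [e1]
      linear_combination (-(β*(m.val 1 0)+m.val 0 1)) * hrel
    · simp [Gvec, Fmat]; try rw [h11]
      field_simp
      try rw [e2]
      linear_combination (-(β*(m.val 1 0)+m.val 0 1)) * hrel
    · simp [Gvec, Fmat]; try rw [h11]
      field_simp
      try rw [e3]
      linear_combination (2*(m.val 0 0)) * hrel
  · intro u v
    apply Subtype.ext
    rw [LieAlgebra.SpecialLinear.sl_bracket]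
    show Fmat β p q (Lbracket α β u v)
        = Fmat β p q u * Fmat β p q v - Fmat β p q v * Fmat β p q u
    ext i j
    fin_cases i <;> fin_cases j <;>
      · simp [Fmat, Lbracket, Matrix.mul_apply, Fin.sum_univ_two]
        field_simp
        try rw [hα2]
        ring

private def tauEquiv {k : Type*} [Field k] : (Fin 3 → k) ≃ₗ[k] (Fin 3 → k) where
  toFun u := ![u 1, u 0, -u 2]
  invFun u := ![u 1, u 0, -u 2]
  map_add' u v := by funext i; fin_cases i <;> simp <;> ring
  map_smul' c u := by funext i; fin_cases i <;> simp [mul_neg]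
  left_inv u := by funext i; fin_cases i <;> simp
  right_inv u := by funext i; fin_cases i <;> simp

private lemma tau_bracket {k : Type*} [Field k] (α β : k) (u v : Fin 3 → k) :
    tauEquiv (Lbracket α β u v) = Lbracket β α (tauEquiv u) (tauEquiv v) := by
  funext i
  fin_cases i <;> simp [tauEquiv, Lbracket, -mul_eq_mul_left_iff, -mul_eq_mul_right_iff] <;> ring

private lemma repr_shrink {k : Type*} [Field k] (hchar : (2:k) ≠ 0) (α β a b c : k)
    (hα : α ≠ 0) (hβ : β ≠ 0) (h : β*a^2 + α*b^2 + α*β*c^2 = -1) :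
    ∃ x y : k, -α*x^2 + -β*y^2 = 1 := by
  have hkey : β*(a^2+α*c^2)^2 = -(a-α*b*c)^2 - α*(c+a*b)^2 := by
    linear_combination (a^2+α*c^2)*h
  by_cases hc : c = 0
  · refine ⟨b, a, ?_⟩
    subst hc
    linear_combination -h
  · by_cases hs : a^2 + α*c^2 = 0
    · have ha : a ≠ 0 := by
        intro h0
        apply hc
        have hac : α*c^2 = 0 := by linear_combination hs - a*h0
        rcases mul_eq_zero.mp hac with h' | h'
        · exact absurd h' hα
        · exact pow_eq_zero_iff two_ne_zero |>.mp h'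
      refine ⟨c/a, 0, ?_⟩
      field_simp
      linear_combination -hs
    · by_cases hd : a - α*b*c = 0
      · have hkey2 : β*(a^2+α*c^2)^2 = -(α*(c+a*b)^2) := by
          linear_combination hkey - (a - α*b*c)*hd
        have hw : c + a*b ≠ 0 := by
          intro h0
          have h1 : β*(a^2+α*c^2)^2 = 0 := by
            linear_combination hkey2 - α*(c+a*b)*h0
          rcases mul_eq_zero.mp h1 with h' | h'
          · exact hβ h'
          · exact hs (pow_eq_zero_iff two_ne_zero |>.mp h')
        refine ⟨(α-1)/(2*α), (-1-α)*(a^2+α*c^2)/(2*α*(c+a*b)), ?_⟩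
        field_simp
        linear_combination (-(1+α)^2) * hkey2
      · refine ⟨(c+a*b)/(a-α*b*c), (a^2+α*c^2)/(a-α*b*c), ?_⟩
        have hd' : a - α*c*b ≠ 0 := fun h0 => hd (by linear_combination h0)
        field_simp
        linear_combination (-1) * hkey

/-- `L(α,β)` is split (isomorphic to `sl(2,k)`) if and only if the binary quadratic form
`⟨−α,−β⟩` represents `1`, i.e. the Hilbert symbol `(−α,−β)` equals `1`. -/
theorem L_split_iff_hilbert (k : Type*) [Field k] (hchar : (2 : k) ≠ 0)
    (α β : k) (hα : α ≠ 0) (hβ : β ≠ 0) :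
    (∃ e : (Fin 3 → k) ≃ₗ[k] LieAlgebra.SpecialLinear.sl (Fin 2) k,
        ∀ u v : Fin 3 → k, e (Lbracket α β u v) = ⁅e u, e v⁆) ↔
      ∃ x y : k, -α * x ^ 2 + -β * y ^ 2 = 1 := by
  constructor
  · rintro ⟨e, he⟩
    set H : LieAlgebra.SpecialLinear.sl (Fin 2) k :=
      ⟨!![1,0;0,-1], (by simp [Matrix.trace_fin_two] :
        Matrix.trace (!![1,0;0,-1] : Matrix (Fin 2) (Fin 2) k) = 0)⟩ with hHdef
    set E : LieAlgebra.SpecialLinear.sl (Fin 2) k :=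
      ⟨!![0,1;0,0], (by simp [Matrix.trace_fin_two] :
        Matrix.trace (!![0,1;0,0] : Matrix (Fin 2) (Fin 2) k) = 0)⟩ with hEdef
    have hHE : ⁅H, E⁆ = (2:k) • E := by
      apply Subtype.ext
      rw [LieAlgebra.SpecialLinear.sl_bracket]
      show (!![1,0;0,-1] : Matrix (Fin 2) (Fin 2) k) * !![0,1;0,0]
          - !![0,1;0,0] * !![1,0;0,-1] = (2:k) • !![0,1;0,0]
      ext i j
      fin_cases i <;> fin_cases j <;>
        simp [Matrix.mul_apply, Fin.sum_univ_two] <;> norm_num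
    set u := e.symm H with hu
    set v := e.symm E with hv'
    have hv : v ≠ 0 := by
      intro h0
      have hE0 : E = 0 := by
        have := congrArg e h0
        rwa [e.apply_symm_apply, map_zero] at this
      have : (E.val 0 1 : k) = 1 := by rw [hEdef]; simp
      rw [hE0] at this
      simp at this
    have huv : Lbracket α β u v = (2:k) • v := by
      apply e.injective
      rw [map_smul, he, hu, hv', e.apply_symm_apply, e.apply_symm_apply, hHE]
    have h0 : α * (u 1 * v 2 - u 2 * v 1) = 2 * v 0 := by
      have := congrFun huv 0
      simpa [Lbracket] using this
    have h1 : β * (u 2 * v 0 - u 0 * v 2) = 2 * v 1 := by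
      have := congrFun huv 1
      simpa [Lbracket] using this
    have h2 : u 0 * v 1 - u 1 * v 0 = 2 * v 2 := by
      have := congrFun huv 2
      simpa [Lbracket] using this
    have c0 : (β*u 0*v 0 + α*u 1*v 1 + α*β*u 2*v 2) * u 0
        = (β*u 0^2 + α*u 1^2 + α*β*u 2^2 + 4) * v 0 := by
      linear_combination α * u 1 * h2 - α * u 2 * h1 + 2 * h0
    have c1 : (β*u 0*v 0 + α*u 1*v 1 + α*β*u 2*v 2) * u 1
        = (β*u 0^2 + α*u 1^2 + α*β*u 2^2 + 4) * v 1 := by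
      linear_combination β * u 2 * h0 - β * u 0 * h2 + 2 * h1
    have c2 : (β*u 0*v 0 + α*u 1*v 1 + α*β*u 2*v 2) * u 2
        = (β*u 0^2 + α*u 1^2 + α*β*u 2^2 + 4) * v 2 := by
      linear_combination u 0 * h1 - u 1 * h0 + 2 * h2
    by_cases hN : (β*u 0*v 0 + α*u 1*v 1 + α*β*u 2*v 2) = 0
    · -- Q + 4 = 0
      have hvi : ∃ i, v i ≠ 0 := by
        by_contra h'
        push_neg at h'
        exact hv (funext h')
      obtain ⟨i, hvi⟩ := hvi
      have hQ : β*u 0^2 + α*u 1^2 + α*β*u 2^2 + 4 = 0 := by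
        fin_cases i
        · exact (mul_eq_zero.mp (show (β*u 0^2 + α*u 1^2 + α*β*u 2^2 + 4) * v 0 = 0 by
            linear_combination -c0 + u 0 * hN)).resolve_right hvi
        · exact (mul_eq_zero.mp (show (β*u 0^2 + α*u 1^2 + α*β*u 2^2 + 4) * v 1 = 0 by
            linear_combination -c1 + u 1 * hN)).resolve_right hvi
        · exact (mul_eq_zero.mp (show (β*u 0^2 + α*u 1^2 + α*β*u 2^2 + 4) * v 2 = 0 by
            linear_combination -c2 + u 2 * hN)).resolve_right hvi
      apply repr_shrink hchar α β (u 0/2) (u 1/2) (u 2/2) hα hβ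
      field_simp
      linear_combination hQ
    · exfalso
      apply hv
      have hv0 : v 0 = 0 := by
        have h' : 2*(β*u 0*v 0 + α*u 1*v 1 + α*β*u 2*v 2)^2*v 0 = 0 := by
          linear_combination (-(β*u 0*v 0 + α*u 1*v 1 + α*β*u 2*v 2)^2)*h0
            + α*(β*u 0*v 0 + α*u 1*v 1 + α*β*u 2*v 2)*v 2*c1
            - α*(β*u 0*v 0 + α*u 1*v 1 + α*β*u 2*v 2)*v 1*c2
        rcases mul_eq_zero.mp h' with h'' | h''
        · exact absurd (mul_eq_zero.mp h'')
            (by rintro (h3 | h3)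
                · exact hchar h3
                · exact hN (pow_eq_zero_iff two_ne_zero |>.mp h3))
        · exact h''
      have hv1 : v 1 = 0 := by
        have h' : 2*(β*u 0*v 0 + α*u 1*v 1 + α*β*u 2*v 2)^2*v 1 = 0 := by
          linear_combination (-(β*u 0*v 0 + α*u 1*v 1 + α*β*u 2*v 2)^2)*h1
            + β*(β*u 0*v 0 + α*u 1*v 1 + α*β*u 2*v 2)*v 0*c2
            - β*(β*u 0*v 0 + α*u 1*v 1 + α*β*u 2*v 2)*v 2*c0
        rcases mul_eq_zero.mp h' with h'' | h''
        · exact absurd (mul_eq_zero.mp h'')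
            (by rintro (h3 | h3)
                · exact hchar h3
                · exact hN (pow_eq_zero_iff two_ne_zero |>.mp h3))
        · exact h''
      have hv2 : v 2 = 0 := by
        have h' : 2*(β*u 0*v 0 + α*u 1*v 1 + α*β*u 2*v 2)^2*v 2 = 0 := by
          linear_combination (-(β*u 0*v 0 + α*u 1*v 1 + α*β*u 2*v 2)^2)*h2
            + (β*u 0*v 0 + α*u 1*v 1 + α*β*u 2*v 2)*v 1*c0
            - (β*u 0*v 0 + α*u 1*v 1 + α*β*u 2*v 2)*v 0*c1
        rcases mul_eq_zero.mp h' with h'' | h''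
        · exact absurd (mul_eq_zero.mp h'')
            (by rintro (h3 | h3)
                · exact hchar h3
                · exact hN (pow_eq_zero_iff two_ne_zero |>.mp h3))
        · exact h''
      funext i
      fin_cases i
      · exact hv0
      · exact hv1
      · exact hv2
  · rintro ⟨x, y, hxy⟩
    by_cases hx : x = 0
    · have hy : y ≠ 0 := by
        intro h0
        rw [hx, h0] at hxy
        simp at hxy
      have hrel' : (1/y)^2 + α*(0:k)^2 = -β := by
        field_simp
        linear_combination -hxy - α*x*hx
      obtain ⟨e, he⟩ := buildA hchar β α (1/y) 0 hα hβ hrel'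
      refine ⟨tauEquiv.trans e, ?_⟩
      intro u v
      show e (tauEquiv (Lbracket α β u v)) = ⁅e (tauEquiv u), e (tauEquiv v)⁆
      rw [tau_bracket]
      exact he _ _
    · have hrel' : (1/x)^2 + β*(y/x)^2 = -α := by
        field_simp
        linear_combination -hxy
      exact buildA hchar α β (1/x) (y/x) hβ hα hrel'
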